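/- For any integers m ≥ 1 and n ≥ 1, the sum over all complete (m+1)-ary trees T with n internal vertices of the product over all internal vertices v of T of ((m·h_v + 1)x − h_v + 1)/((m+1)·h_v) equals (1/(mn+1)) · C((mn+1)x, n), as an identity of polynomials in x over ℚ, where h_v denotes the number of internal vertices of the subtree of T rooted at v. -/

import Mathlib

open Polynomial Finset

noncomputable section DuLiu

/-- generalized binomial coefficient C(a,k) over ℚ -/
def bq (a : ℚ) (k : ℕ) : ℚ := (∏ j ∈ Finset.range k, (a - j)) / k.factorial

lemma bq_zero (a : ℚ) : bq a 0 = 1 := by simp [bq]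

lemma bq_one (a : ℚ) : bq a 1 = a := by simp [bq]

lemma bq_succ (a : ℚ) (k : ℕ) : ((k : ℚ) + 1) * bq a (k + 1) = (a - k) * bq a k := by
  have h1 : ((k.factorial : ℚ)) ≠ 0 := Nat.cast_ne_zero.2 k.factorial_ne_zero
  have h2 : ((k + 1).factorial : ℚ) ≠ 0 := Nat.cast_ne_zero.2 (k + 1).factorial_ne_zero
  rw [bq, bq, Finset.prod_range_succ]
  rw [Nat.factorial_succ]
  push_cast
  field_simp

lemma prod_shift (a : ℚ) (k : ℕ) :
    ∏ j ∈ Finset.range (k + 1), (a - j) = a * ∏ j ∈ Finset.range k, (a - 1 - j) := by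
  rw [Finset.prod_range_succ']
  simp only [Nat.cast_add, Nat.cast_one, Nat.cast_zero, sub_zero]
  rw [mul_comm]
  congr 1
  refine Finset.prod_congr rfl fun j _ => by ring

lemma bq_absorb (a : ℚ) (k : ℕ) : ((k : ℚ) + 1) * bq a (k + 1) = a * bq (a - 1) k := by
  have h1 : ((k.factorial : ℚ)) ≠ 0 := Nat.cast_ne_zero.2 k.factorial_ne_zero
  rw [bq, bq, prod_shift, Nat.factorial_succ]
  push_cast
  field_simp

lemma bq_pascal (a : ℚ) (k : ℕ) : bq a (k + 1) = bq (a - 1) (k + 1) + bq (a - 1) k := by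
  have h1 : ((k.factorial : ℚ)) ≠ 0 := Nat.cast_ne_zero.2 k.factorial_ne_zero
  rw [bq, bq, bq, prod_shift, Finset.prod_range_succ, Nat.factorial_succ]
  push_cast
  field_simp
  ring

/-- the Rothe summand r_k(x) = x/(x+kz) C(x+kz, k), in denominator-free form -/
def gq (z x : ℚ) : ℕ → ℚ
  | 0 => 1
  | (k + 1) => bq (x + ((k : ℚ) + 1) * z) (k + 1) - z * bq (x + ((k : ℚ) + 1) * z - 1) k

lemma gq_zero (z x : ℚ) : gq z x 0 = 1 := rfl

lemma gq_zero_left (z : ℚ) (k : ℕ) : gq z 0 (k + 1) = 0 := by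
  have h := bq_absorb (((k : ℚ) + 1) * z) k
  have hk : ((k : ℚ) + 1) ≠ 0 := by positivity
  rw [gq]
  rw [zero_add]
  rw [mul_assoc] at h
  have h3 := mul_left_cancel₀ hk h
  rw [h3]; ring

lemma gq_pascal (z x : ℚ) (k : ℕ) :
    gq z x (k + 1) - gq z (x - 1) (k + 1) = gq z (x + z - 1) k := by
  cases k with
  | zero =>
    simp only [gq, Nat.cast_zero, zero_add, one_mul, bq_one, bq_zero]
    ring
  | succ k =>
    simp only [gq]
    have e1 : x - 1 + ((k : ℚ) + 1 + 1) * z = x + ((k : ℚ) + 1 + 1) * z - 1 := by ring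
    have e2 : x + z - 1 + ((k : ℚ) + 1) * z = x + ((k : ℚ) + 1 + 1) * z - 1 := by ring
    push_cast
    rw [e1, e2]
    set a := x + ((k : ℚ) + 1 + 1) * z with ha
    have p1 : bq a (k + 2) - bq (a - 1) (k + 2) = bq (a - 1) (k + 1) := by
      have := bq_pascal a (k + 1); linarith [this]
    have p2 : bq (a - 1) (k + 1) - bq (a - 1 - 1) (k + 1) = bq (a - 1 - 1) k := by
      have := bq_pascal (a - 1) k; linarith [this]
    linear_combination p1 - z * p2


/-- polynomial (in x) version of bq (x + c) k -/
def Bp (c : ℚ) (k : ℕ) : ℚ[X] :=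
  Polynomial.C ((k.factorial : ℚ))⁻¹ * ∏ j ∈ Finset.range k, (Polynomial.X + Polynomial.C (c - j))

lemma eval_Bp (x c : ℚ) (k : ℕ) : (Bp c k).eval x = bq (x + c) k := by
  simp only [Bp, bq, eval_mul, eval_C, eval_prod, eval_add, eval_X, div_eq_inv_mul]
  congr 1
  exact Finset.prod_congr rfl fun j _ => by ring

def Gq (z : ℚ) : ℕ → ℚ[X]
  | 0 => 1
  | (k + 1) => Bp (((k : ℚ) + 1) * z) (k + 1) - Polynomial.C z * Bp (((k : ℚ) + 1) * z - 1) k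

lemma eval_Gq (z x : ℚ) (k : ℕ) : (Gq z k).eval x = gq z x k := by
  cases k with
  | zero => simp [Gq, gq]
  | succ k =>
    simp only [Gq, gq, eval_sub, eval_mul, eval_C, eval_Bp]
    have : x + (((k : ℚ) + 1) * z - 1) = x + ((k : ℚ) + 1) * z - 1 := by ring
    rw [this]

lemma poly_zero_of_nat_roots (p : ℚ[X]) (h : ∀ j : ℕ, p.eval (j : ℚ) = 0) : p = 0 :=
  p.eq_zero_of_infinite_isRoot
    (Set.infinite_of_injective_forall_mem (f := fun j : ℕ => (j : ℚ)) Nat.cast_injective h)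



lemma rothe (z : ℚ) : ∀ (n : ℕ) (x y : ℚ),
    ∑ k ∈ Finset.range (n + 1), gq z x k * gq z y (n - k) = gq z (x + y) n := by
  intro n
  induction n with
  | zero => intro x y; simp [gq_zero]
  | succ n IH =>
    intro x y
    -- D x := LHS x - RHS x satisfies D x = D (x-1) and D 0 = 0; polynomial ⇒ D ≡ 0
    set D : ℚ → ℚ := fun x =>
      (∑ k ∈ Finset.range (n + 2), gq z x k * gq z y (n + 1 - k)) - gq z (x + y) (n + 1) with hD
    have hstep : ∀ x : ℚ, D x = D (x - 1) := by
      intro x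
      have key : (∑ k ∈ Finset.range (n + 2), gq z x k * gq z y (n + 1 - k))
          - (∑ k ∈ Finset.range (n + 2), gq z (x - 1) k * gq z y (n + 1 - k))
          = gq z (x + y) (n + 1) - gq z (x - 1 + y) (n + 1) := by
        rw [← Finset.sum_sub_distrib]
        have : ∀ k ∈ Finset.range (n + 2),
            gq z x k * gq z y (n + 1 - k) - gq z (x - 1) k * gq z y (n + 1 - k)
            = (gq z x k - gq z (x - 1) k) * gq z y (n + 1 - k) := fun k _ => by ring
        rw [Finset.sum_congr rfl this, Finset.sum_range_succ']
        simp only [gq_zero, sub_self, zero_mul, add_zero]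
        have : ∀ k ∈ Finset.range (n + 1),
            (gq z x (k + 1) - gq z (x - 1) (k + 1)) * gq z y (n + 1 - (k + 1))
            = gq z (x + z - 1) k * gq z y (n - k) := by
          intro k hk
          rw [gq_pascal]
          have e : n + 1 - (k + 1) = n - k := by omega
          rw [e]
        rw [Finset.sum_congr rfl this, IH (x + z - 1) y]
        have hxy : x + y = (x - 1 + y) + 1 := by ring
        have := gq_pascal z (x + y) n
        have e : x + z - 1 + y = x + y + z - 1 := by ring
        rw [e, ← gq_pascal z (x + y) n]
        congr 2 <;> ring
      simp only [hD]
      linarith [key]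
    have hzero : D 0 = 0 := by
      simp only [hD]
      rw [Finset.sum_range_succ']
      simp only [gq_zero_left, zero_mul, Finset.sum_const_zero, zero_add, gq_zero, one_mul,
        Nat.sub_zero, zero_add, sub_self]
    -- polynomial representation
    set P : ℚ[X] := (∑ k ∈ Finset.range (n + 2), Gq z k * Polynomial.C (gq z y (n + 1 - k)))
      - (Gq z (n + 1)).comp (Polynomial.X + Polynomial.C y) with hP
    have hev : ∀ x : ℚ, P.eval x = D x := by
      intro x
      simp only [hP, hD, eval_sub, eval_finset_sum, eval_mul, eval_C, eval_Gq, eval_comp,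
        eval_add, eval_X]
    have hnat : ∀ j : ℕ, P.eval (j : ℚ) = 0 := by
      intro j
      induction j with
      | zero => rw [hev]; exact_mod_cast hzero
      | succ j ihj =>
        rw [hev]
        have : ((j + 1 : ℕ) : ℚ) - 1 = (j : ℚ) := by push_cast; ring
        rw [hstep, this, ← hev]
        exact ihj
    have hP0 : P = 0 := poly_zero_of_nat_roots P hnat
    have : D x = 0 := by rw [← hev, hP0, eval_zero]
    simp only [hD] at this
    linarith [this]

lemma gq_zero_left' (z : ℚ) (n : ℕ) : gq z 0 n = if n = 0 then 1 else 0 := by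
  cases n with
  | zero => simp [gq_zero]
  | succ n => simp [gq_zero_left]

lemma rotheMulti (z x : ℚ) : ∀ (s n : ℕ),
    ∑ k ∈ Finset.Nat.antidiagonalTuple s n, ∏ i, gq z x (k i) = gq z ((s : ℚ) * x) n := by
  intro s
  induction s with
  | zero =>
    intro n
    cases n with
    | zero =>
      rw [Finset.Nat.antidiagonalTuple_zero_zero]
      simp [gq_zero]
    | succ n =>
      rw [Finset.Nat.antidiagonalTuple_zero_succ]
      simp [gq_zero_left]
  | succ s IH =>
    intro n
    have hsig : ∑ k ∈ Finset.Nat.antidiagonalTuple (s + 1) n, ∏ i, gq z x (k i)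
        = ∑ p ∈ (antidiagonal n).sigma
            (fun ab => Finset.Nat.antidiagonalTuple s ab.2),
            ∏ i, gq z x ((Fin.cons p.1.1 p.2 : Fin (s+1) → ℕ) i) := by
      refine Finset.sum_bij'
        (fun k _ => (⟨(k 0, ∑ i, Fin.tail k i), Fin.tail k⟩ :
          (ab : ℕ × ℕ) × (Fin s → ℕ)))
        (fun p _ => Fin.cons p.1.1 p.2) ?_ ?_ ?_ ?_ ?_
      · intro k hk
        rw [Finset.Nat.mem_antidiagonalTuple, Fin.sum_univ_succ] at hk
        exact Finset.mem_sigma.2 ⟨HasAntidiagonal.mem_antidiagonal.2 hk,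
          Finset.Nat.mem_antidiagonalTuple.2 rfl⟩
      · intro p hp
        rw [Finset.mem_sigma, HasAntidiagonal.mem_antidiagonal,
          Finset.Nat.mem_antidiagonalTuple] at hp
        rw [Finset.Nat.mem_antidiagonalTuple, Fin.sum_univ_succ]
        simp only [Fin.cons_zero, Fin.cons_succ]
        rw [hp.2]
        exact hp.1
      · intro k hk
        exact Fin.cons_self_tail k
      · rintro ⟨⟨a, b⟩, k'⟩ hp
        rw [Finset.mem_sigma, Finset.Nat.mem_antidiagonalTuple] at hp
        simp only [Fin.cons_zero, Fin.tail_cons]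
        rw [hp.2]
      · intro k hk
        conv_lhs => rw [← Fin.cons_self_tail k]
    rw [hsig, Finset.sum_sigma]
    have : ∀ ab ∈ antidiagonal n,
        (∑ k' ∈ Finset.Nat.antidiagonalTuple s ab.2,
          ∏ i, gq z x ((Fin.cons ab.1 k' : Fin (s+1) → ℕ) i))
        = gq z x ab.1 * gq z ((s : ℚ) * x) ab.2 := by
      intro ab _
      rw [← IH ab.2, Finset.mul_sum]
      refine Finset.sum_congr rfl fun k' _ => ?_
      rw [Fin.prod_univ_succ]
      simp [Fin.cons_zero, Fin.cons_succ]
    rw [Finset.sum_congr rfl this, Finset.Nat.sum_antidiagonal_eq_sum_range_succ_mk,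
      rothe z n x ((s : ℚ) * x)]
    congr 1
    push_cast
    ring


-- ===== tree side =====

/-- A complete `m`-ary tree: a `leaf` is an external vertex and a `node`
has exactly `m` linearly ordered subtrees. -/
inductive MTree (m : ℕ) : Type
  | leaf : MTree m
  | node : (Fin m → MTree m) → MTree m

namespace MTree

/-- The number of internal vertices of a complete `m`-ary tree. -/
def internals {m : ℕ} : MTree m → ℕ
  | leaf => 0
  | node c => 1 + ∑ i, (c i).internals

/-- The first kind of hook length of the root of `node c`: one plus the number of
internal vertices of all subtrees except the rightmost one. -/
def hook1 {m : ℕ} (c : Fin m → MTree m) : ℕ :=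
  1 + ∑ i ∈ Finset.univ.filter (fun i : Fin m => (i : ℕ) + 1 < m), (c i).internals

/-- The product of `f (𝓗_v)` over all internal vertices `v` of a complete `m`-ary
tree, where `𝓗_v` is the first kind of hook length. -/
def hookProd1 {m : ℕ} {R : Type*} [CommSemiring R] (f : ℕ → R) : MTree m → R
  | leaf => 1
  | node c => f (hook1 c) * ∏ i, hookProd1 f (c i)

/-- The number of internal vertices of the `(m+1-|S|)`-ary tree `T^S` obtained from a
complete `(m+1)`-ary tree `T` by recursively deleting, for every `r ∈ S ⊆ [m]`,
the `r`-th subtree of every remaining internal vertex (the label `r ∈ {1,…,m}`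
corresponds to the child with index `r - 1`, i.e. to `Fin.castSucc` of `Fin m`). -/
def internalsS {m : ℕ} (S : Finset (Fin m)) : MTree (m + 1) → ℕ
  | leaf => 0
  | node c => 1 + ∑ i ∈ (S.image Fin.castSucc)ᶜ, internalsS S (c i)

/-- The product of `f (ℍ_v^S)` over all internal vertices `v` of a complete
`(m+1)`-ary tree, where `ℍ_v^S` is the second kind of hook length. -/
def hookProdS {m : ℕ} {R : Type*} [CommSemiring R] (S : Finset (Fin m)) (f : ℕ → R) :
    MTree (m + 1) → R
  | leaf => 1
  | node c => f (internalsS S (node c)) * ∏ i, hookProdS S f (c i)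

end MTree


namespace MTree

lemma internals_eq_zero {m : ℕ} (T : MTree m) : T.internals = 0 ↔ T = leaf := by
  cases T with
  | leaf => simp [internals]
  | node c => simp [internals]

lemma finite_le (m n : ℕ) : {T : MTree m | T.internals ≤ n}.Finite := by
  induction n with
  | zero =>
    refine Set.Finite.subset (Set.finite_singleton leaf) fun T hT => ?_
    simp only [Set.mem_setOf_eq, Nat.le_zero] at hT
    simpa using (internals_eq_zero T).1 hT
  | succ n ih =>
    refine Set.Finite.subset (Set.Finite.insert leaf
      (Set.Finite.image node (Set.Finite.pi (fun _ : Fin m => ih)))) fun T hT => ?_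
    cases T with
    | leaf => exact Set.mem_insert _ _
    | node c =>
      refine Set.mem_insert_of_mem _ ⟨c, fun i _ => ?_, rfl⟩
      simp only [Set.mem_setOf_eq, internals] at hT ⊢
      have h1 : (c i).internals ≤ ∑ j, (c j).internals :=
        Finset.single_le_sum (f := fun j => (c j).internals) (fun _ _ => Nat.zero_le _)
          (Finset.mem_univ i)
      omega

lemma finite_eq (m n : ℕ) : {T : MTree m | T.internals = n}.Finite :=
  Set.Finite.subset (finite_le m n) fun _ hT => le_of_eq hT

lemma internalsS_empty {m : ℕ} (T : MTree (m + 1)) :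
    internalsS (∅ : Finset (Fin m)) T = T.internals := by
  induction T with
  | leaf => rfl
  | node c ih =>
    simp only [internalsS, internals, Finset.image_empty, Finset.compl_empty]
    congr 1
    exact Finset.sum_congr rfl fun i _ => ih i

lemma hookProdS_empty_node {m : ℕ} {R : Type*} [CommSemiring R] (f : ℕ → R)
    (c : Fin (m + 1) → MTree (m + 1)) :
    hookProdS (∅ : Finset (Fin m)) f (node c)
      = f ((node c).internals) * ∏ i, hookProdS (∅ : Finset (Fin m)) f (c i) := by
  rw [hookProdS, internalsS_empty]

end MTree

section TreeSum

variable {m : ℕ} (f : ℕ → ℚ[X])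

/-- the finite sum over trees with `n` internal vertices -/
def Fsum (m : ℕ) (f : ℕ → ℚ[X]) (n : ℕ) : ℚ[X] :=
  ∑ T ∈ (MTree.finite_eq (m + 1) n).toFinset, MTree.hookProdS (∅ : Finset (Fin m)) f T

lemma finsum_eq_Fsum (n : ℕ) :
    (∑ᶠ T ∈ {T : MTree (m + 1) | T.internals = n},
      MTree.hookProdS (∅ : Finset (Fin m)) f T) = Fsum m f n := by
  rw [← (MTree.finite_eq (m + 1) n).coe_toFinset, finsum_mem_coe_finset, Fsum]

lemma Fsum_zero : Fsum m f 0 = 1 := by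
  have h : (MTree.finite_eq (m + 1) 0).toFinset = {MTree.leaf} := by
    ext T
    simp [MTree.internals_eq_zero]
  rw [Fsum, h, Finset.sum_singleton]
  rfl

lemma Fsum_succ (n : ℕ) :
    Fsum m f (n + 1)
      = f (n + 1) * ∑ k ∈ Finset.Nat.antidiagonalTuple (m + 1) n,
          ∏ i, Fsum m f (k i) := by
  classical
  set B : Finset (Fin (m + 1) → MTree (m + 1)) :=
    (Finset.Nat.antidiagonalTuple (m + 1) n).biUnion
      (fun k => Fintype.piFinset fun i => (MTree.finite_eq (m + 1) (k i)).toFinset) with hB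
  have hmemB : ∀ c, c ∈ B ↔ ∑ i, (c i).internals = n := by
    intro c
    simp only [hB, Finset.mem_biUnion, Fintype.mem_piFinset, Set.Finite.mem_toFinset,
      Set.mem_setOf_eq, Finset.Nat.mem_antidiagonalTuple]
    constructor
    · rintro ⟨k, hk, hc⟩
      rw [← hk]
      exact Finset.sum_congr rfl fun i _ => hc i
    · intro hc
      exact ⟨fun i => (c i).internals, hc, fun i => rfl⟩
  have himg : (MTree.finite_eq (m + 1) (n + 1)).toFinset = B.image MTree.node := by
    ext T
    simp only [Set.Finite.mem_toFinset, Set.mem_setOf_eq, Finset.mem_image]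
    constructor
    · intro hT
      cases T with
      | leaf => simp [MTree.internals] at hT
      | node c =>
        refine ⟨c, (hmemB c).2 ?_, rfl⟩
        simp only [MTree.internals] at hT
        omega
    · rintro ⟨c, hc, rfl⟩
      have := (hmemB c).1 hc
      simp only [MTree.internals]
      omega
  rw [Fsum, himg, Finset.sum_image (fun a _ b _ h => by injection h)]
  have hval : ∀ c ∈ B, MTree.hookProdS (∅ : Finset (Fin m)) f (MTree.node c)
      = f (n + 1) * ∏ i, MTree.hookProdS (∅ : Finset (Fin m)) f (c i) := by
    intro c hc
    rw [MTree.hookProdS_empty_node]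
    congr 2
    simp only [MTree.internals]
    have := (hmemB c).1 hc
    omega
  rw [Finset.sum_congr rfl hval, ← Finset.mul_sum]
  congr 1
  rw [hB, Finset.sum_biUnion]
  · refine Finset.sum_congr rfl fun k _ => ?_
    simp only [Fsum]
    rw [Finset.prod_univ_sum]
  · -- disjointness
    intro k hk k' hk' hne
    simp only [Function.onFun]
    rw [Finset.disjoint_left]
    intro c hc hc'
    apply hne
    funext i
    have h1 : (c i).internals = k i := by
      have := (Fintype.mem_piFinset.1 hc) i
      simpa [Set.Finite.mem_toFinset] using this
    have h2 : (c i).internals = k' i := by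
      have := (Fintype.mem_piFinset.1 hc') i
      simpa [Set.Finite.mem_toFinset] using this
    rw [← h1, h2]

end TreeSum

-- ===== assembly =====

def Pq (m k : ℕ) : ℚ[X] :=
  Polynomial.C (((m : ℚ) * k + 1)⁻¹ * (k.factorial : ℚ)⁻¹) *
    ∏ j ∈ Finset.range k, (Polynomial.C ((m : ℚ) * k + 1) * Polynomial.X - Polynomial.C (j : ℚ))

lemma evalPq (m k : ℕ) (t : ℚ) :
    (Pq m k).eval t = ((m : ℚ) * k + 1)⁻¹ * bq (((m : ℚ) * k + 1) * t) k := by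
  simp only [Pq, eval_mul, eval_C, eval_prod, eval_sub, eval_X, bq]
  rw [div_eq_mul_inv]
  ring

lemma bq_zero_arg (k : ℕ) : bq 0 (k + 1) = 0 := by
  rw [bq]
  rw [Finset.prod_eq_zero (Finset.mem_range.2 (Nat.succ_pos k))]
  · simp
  · simp

lemma gq_eq_Pq_eval (m k : ℕ) (t : ℚ) :
    gq ((m : ℚ) * t) t k = ((m : ℚ) * k + 1)⁻¹ * bq (((m : ℚ) * k + 1) * t) k := by
  cases k with
  | zero => simp [gq_zero, bq_zero]
  | succ k =>
    have harg : t + ((k : ℚ) + 1) * ((m : ℚ) * t) = ((m : ℚ) * (k + 1 : ℕ) + 1) * t := by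
      push_cast; ring
    rw [gq, harg]
    set A : ℚ := (m : ℚ) * (k + 1 : ℕ) + 1 with hA
    by_cases ht : t = 0
    · subst ht
      rw [mul_zero, bq_zero_arg]
      simp [bq_zero_arg]
    · have hA0 : A ≠ 0 := by
        have : (0 : ℚ) < A := by rw [hA]; positivity
        exact ne_of_gt this
      have hAt : A * t ≠ 0 := mul_ne_zero hA0 ht
      have habs := bq_absorb (A * t) k
      have hpa : A = (m : ℚ) * ((k : ℚ) + 1) + 1 := by rw [hA]; push_cast; ring
      rw [inv_mul_eq_div, eq_div_iff hA0]
      linear_combination (m : ℚ) * habs + bq (A * t) (k + 1) * hpa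

lemma key_step (m n : ℕ) (t : ℚ) :
    (((m : ℚ) + 1) * ((n : ℚ) + 1))⁻¹ * (((m : ℚ) * ((n : ℚ) + 1) + 1) * t - (n : ℚ))
        * gq ((m : ℚ) * t) (((m : ℚ) + 1) * t) n
      = gq ((m : ℚ) * t) t (n + 1) := by
  have hm1 : ((m : ℚ) + 1) ≠ 0 := by positivity
  cases n with
  | zero =>
    simp only [Nat.cast_zero, add_zero, zero_add, mul_one, sub_zero, gq, bq_one, bq_zero]
    field_simp
    ring
  | succ n =>
    have hN : ((n : ℚ) + 1) ≠ 0 := by positivity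
    have hN1 : ((n : ℚ) + 1 + 1) ≠ 0 := by positivity
    set a : ℚ := ((m : ℚ) * (((n : ℚ) + 1) + 1) + 1) * t with ha
    have e1 : ((m : ℚ) + 1) * t + ((n : ℚ) + 1) * ((m : ℚ) * t) = a := by rw [ha]; ring
    have e2 : t + (((n : ℚ) + 1) + 1) * ((m : ℚ) * t) = a := by rw [ha]; ring
    have hc1 : ((n : ℕ) + 1 + 1 : ℚ) = ((n : ℚ) + 1) + 1 := by push_cast; ring
    simp only [gq, Nat.cast_succ]
    rw [e1, e2]
    have h1 := bq_succ a (n + 1)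
    have h2 := bq_succ (a - 1) n
    have h3 := bq_absorb a n
    push_cast at h1 h2 h3 ⊢
    field_simp
    apply mul_left_cancel₀ hN
    linear_combination (-(((m:ℚ)+1))*((n:ℚ)+1)) * h1
      + ((m:ℚ)*t*((m:ℚ)+1)*((n:ℚ)+1+1)) * h2
      + (-(m:ℚ)*(a-((n:ℚ)+1))) * h3
      + (-(m:ℚ)*(a-((n:ℚ)+1))*bq (a-1) n) * ha

/-- the main induction -/
lemma Fsum_eq_Pq (m : ℕ) : ∀ n : ℕ,
    Fsum m (fun h =>
      Polynomial.C ((((m : ℚ) + 1) * (h : ℚ))⁻¹) *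
        (Polynomial.C ((m : ℚ) * (h : ℚ) + 1) * Polynomial.X - Polynomial.C ((h : ℚ) - 1))) n
      = Pq m n := by
  intro n
  induction n using Nat.strong_induction_on with
  | _ n IH =>
    cases n with
    | zero =>
      rw [Fsum_zero, Pq]
      simp
    | succ n =>
      rw [Fsum_succ]
      have hIH : ∀ k ∈ Finset.Nat.antidiagonalTuple (m + 1) n, ∀ i : Fin (m + 1),
          Fsum m (fun h =>
            Polynomial.C ((((m : ℚ) + 1) * (h : ℚ))⁻¹) *
              (Polynomial.C ((m : ℚ) * (h : ℚ) + 1) * Polynomial.X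
                - Polynomial.C ((h : ℚ) - 1))) (k i) = Pq m (k i) := by
        intro k hk i
        refine IH (k i) ?_
        rw [Finset.Nat.mem_antidiagonalTuple] at hk
        have : k i ≤ ∑ j, k j := Finset.single_le_sum (f := fun j => k j)
          (fun _ _ => Nat.zero_le _) (Finset.mem_univ i)
        omega
      rw [Finset.sum_congr rfl fun k hk => Finset.prod_congr rfl fun i _ => hIH k hk i]
      -- now a pure polynomial identity; prove by evaluation
      refine Polynomial.funext fun t => ?_
      simp only [eval_mul, eval_finset_sum, eval_prod, eval_sub, eval_C, eval_X, evalPq]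
      simp only [← gq_eq_Pq_eval]
      rw [rotheMulti ((m : ℚ) * t) t (m + 1) n]
      have := key_step m n t
      push_cast
      push_cast at this
      linear_combination this

/-- **Du–Liu hook length formula for `(m+1)`-ary trees, second form.**
For `m ≥ 1` and `n ≥ 1`,
`∑_{T ∈ 𝒯_{n,m+1}} ∏_{v} ((m h_v + 1)x - h_v + 1)/((m+1) h_v)
  = (1/(mn+1)) ⬝ C((mn+1)x, n)` in `ℚ[x]`, where `h_v` is the number of internal
vertices of the subtree rooted at `v` (the case `S = ∅` of the second kind of
hook length) and `C(y,n) = y(y-1)⋯(y-n+1)/n!`. -/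
theorem du_liu_hook_length_formula' (m n : ℕ) (hm : 1 ≤ m) (hn : 1 ≤ n) :
    (∑ᶠ T ∈ {T : MTree (m + 1) | T.internals = n},
        MTree.hookProdS (∅ : Finset (Fin m)) (fun h =>
          C ((((m : ℚ) + 1) * (h : ℚ))⁻¹) *
            (C ((m : ℚ) * (h : ℚ) + 1) * (X : ℚ[X]) - C ((h : ℚ) - 1))) T)
      = C (((m : ℚ) * n + 1)⁻¹ * (n.factorial : ℚ)⁻¹) *
          ∏ j ∈ Finset.range n,
            (C ((m : ℚ) * n + 1) * (X : ℚ[X]) - C (j : ℚ)) := by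
  rw [finsum_eq_Fsum, Fsum_eq_Pq, Pq]
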